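/- Let K = k(ξ,η,θ,ι) be the field of rational functions in four variables over a field k of characteristic 2, and set F = z^2 + (ξ*x + η*y + θ*z + ι)*x^2 + y^3 ∈ K[x,y,z]. Then the Tjurina ideal (∂F/∂x, ∂F/∂y, ∂F/∂z, F) of K[x,y,z] equals the ideal (x^2, y^2, z^2), and the quotient K[x,y,z]/(x^2,y^2,z^2) is a K-vector space of dimension 8. -/

import Mathlib

open MvPolynomial


set_option maxHeartbeats 1000000 in
lemma dim8 (K : Type*) [Field K] :
    Module.finrank K
      (MvPolynomial (Fin 3) K ⧸
        Ideal.span {(X 0 ^ 2 : MvPolynomial (Fin 3) K), X 1 ^ 2, X 2 ^ 2}) = 8 := by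
  classical
  set I : Ideal (MvPolynomial (Fin 3) K) := Ideal.span {X 0 ^ 2, X 1 ^ 2, X 2 ^ 2} with hI
  have key : ∀ (i : Fin 3) (d : Fin 3 →₀ ℕ), (∀ j, d j ≤ 1) →
      coeff d ((X i : MvPolynomial (Fin 3) K) ^ 2) = 0 := by
    intro i d hd
    rw [X_pow_eq_monomial, coeff_monomial, if_neg]
    rintro rfl; simpa using hd i
  have hcoeff : ∀ p ∈ I, ∀ d : Fin 3 →₀ ℕ, (∀ i, d i ≤ 1) → coeff d p = 0 := by
    intro p hp
    refine Submodule.span_induction ?_ ?_ ?_ ?_ hp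
    · rintro x hx d hd
      simp only [Set.mem_insert_iff, Set.mem_singleton_iff] at hx
      rcases hx with rfl | rfl | rfl <;> exact key _ d hd
    · intro d hd; simp
    · intro x y _ _ hx hy d hd
      simp [coeff_add, hx d hd, hy d hd]
    · intro r x _ hx d hd
      rw [smul_eq_mul, coeff_mul]
      refine Finset.sum_eq_zero fun ab hab => ?_
      rw [Finset.HasAntidiagonal.mem_antidiagonal] at hab
      have hb : ab.2 ≤ d := hab ▸ le_add_self
      rw [hx ab.2 (fun i => (hb i).trans (hd i)), mul_zero]
  set s : (Fin 3 → Fin 2) → (Fin 3 →₀ ℕ) :=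
    fun f => Finsupp.equivFunOnFinite.symm (fun i => (f i : ℕ)) with hs
  have hsapp : ∀ f i, s f i = (f i : ℕ) := fun f i => rfl
  have hssmall : ∀ f i, s f i ≤ 1 := fun f i => Nat.lt_succ_iff.mp (f i).2
  have hsinj : Function.Injective s := by
    intro f g h
    funext i
    have := congrFun (congrArg (⇑) h) i
    simpa [hsapp, Fin.val_injective.eq_iff, Fin.val_eq_val] using this
  set v : (Fin 3 → Fin 2) → (MvPolynomial (Fin 3) K ⧸ I) :=
    fun f => Ideal.Quotient.mk I (monomial (s f) 1) with hv
  have hind : LinearIndependent K v := by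
    rw [linearIndependent_iff']
    intro t g hg f hf
    have hmem : (∑ j ∈ t, g j • (monomial (s j) 1 : MvPolynomial (Fin 3) K)) ∈ I := by
      rw [← Ideal.Quotient.eq_zero_iff_mem]
      have : Ideal.Quotient.mk I (∑ j ∈ t, g j • (monomial (s j) 1 : MvPolynomial (Fin 3) K))
          = (Ideal.Quotient.mkₐ K I).toLinearMap (∑ j ∈ t, g j • (monomial (s j) 1)) := rfl
      rw [this, map_sum]
      simp only [map_smul]
      exact hg
    have := hcoeff _ hmem (s f) (hssmall f)
    rw [coeff_sum] at this
    simp only [coeff_smul, coeff_monomial, smul_eq_mul, mul_ite, mul_one, mul_zero,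
      hsinj.eq_iff] at this
    rwa [Finset.sum_ite_eq' t f g, if_pos hf] at this
  have hmono : ∀ d : Fin 3 →₀ ℕ,
      Ideal.Quotient.mk I (monomial d 1) ∈ Submodule.span K (Set.range v) := by
    intro d
    by_cases hd : ∀ i, d i ≤ 1
    · have hds : s (fun i => (⟨d i, by have := hd i; omega⟩ : Fin 2)) = d := by
        ext i
        rw [hsapp]
      rw [← hds]
      exact Submodule.subset_span ⟨_, rfl⟩
    · push_neg at hd
      obtain ⟨i, hi⟩ := hd
      have hle : Finsupp.single i 2 ≤ d := by
        rw [Finsupp.single_le_iff]; omega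
      have heq : (monomial d 1 : MvPolynomial (Fin 3) K)
          = monomial (d - Finsupp.single i 2) 1 * X i ^ 2 := by
        rw [X_pow_eq_monomial, monomial_mul, tsub_add_cancel_of_le hle, mul_one]
      have hmem : (monomial d 1 : MvPolynomial (Fin 3) K) ∈ I := by
        rw [heq]
        exact Ideal.mul_mem_left _ _ (Ideal.subset_span (by fin_cases i <;> simp))
      rw [Ideal.Quotient.eq_zero_iff_mem.mpr hmem]
      exact Submodule.zero_mem _
  have hspan : ⊤ ≤ Submodule.span K (Set.range v) := by
    rintro q -
    obtain ⟨p, rfl⟩ := Ideal.Quotient.mk_surjective q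
    have hps : (Ideal.Quotient.mkₐ K I).toLinearMap p
        = ∑ d ∈ p.support, coeff d p • (Ideal.Quotient.mkₐ K I).toLinearMap (monomial d 1) := by
      conv_lhs => rw [p.as_sum]
      rw [map_sum]
      exact Finset.sum_congr rfl fun d _ => by
        rw [← map_smul, smul_monomial, smul_eq_mul, mul_one]
    have hrw : Ideal.Quotient.mk I p = (Ideal.Quotient.mkₐ K I).toLinearMap p := rfl
    rw [hrw, hps]
    exact Submodule.sum_mem _ fun d _ => Submodule.smul_mem _ _ (hmono d)
  let B : Module.Basis (Fin 3 → Fin 2) K (MvPolynomial (Fin 3) K ⧸ I) := Module.Basis.mk hind hspan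
  rw [Module.finrank_eq_card_basis B]
  simp [Fintype.card_fun]

/-- Generic hyperplane section of type `D_4^0 B_1`: over `K = k(ξ,η,θ,ι)`, for
`F = z^2 + (ξ*x + η*y + θ*z + ι)*x^2 + y^3`, the Tjurina ideal
`(∂F/∂x, ∂F/∂y, ∂F/∂z, F)` equals `(x^2, y^2, z^2)` and the Tjurina algebra has
`K`-dimension 8. Here `ξ, η, θ, ι` are the images in `K` of the four variables. -/
theorem stmt_14 (k : Type*) [Field k] [CharP k 2]
    (K : Type*)
    [Field K] [Algebra (MvPolynomial (Fin 4) k) K] [IsFractionRing (MvPolynomial (Fin 4) k) K]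
    (ξ η θ ι : K)
    (hξ : ξ = algebraMap (MvPolynomial (Fin 4) k) K (X 0))
    (hη : η = algebraMap (MvPolynomial (Fin 4) k) K (X 1))
    (hθ : θ = algebraMap (MvPolynomial (Fin 4) k) K (X 2))
    (hι : ι = algebraMap (MvPolynomial (Fin 4) k) K (X 3))
    (F : MvPolynomial (Fin 3) K)
    (hF : F = X 2 ^ 2 + (C ξ * X 0 + C η * X 1 + C θ * X 2 + C ι) * X 0 ^ 2 + X 1 ^ 3) :
    Ideal.span {pderiv 0 F, pderiv 1 F, pderiv 2 F, F} =
      Ideal.span {(X 0 ^ 2 : MvPolynomial (Fin 3) K), X 1 ^ 2, X 2 ^ 2} ∧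
    Module.finrank K
      (MvPolynomial (Fin 3) K ⧸
        Ideal.span {(X 0 ^ 2 : MvPolynomial (Fin 3) K), X 1 ^ 2, X 2 ^ 2}) = 8 := by
  haveI : CharP K 2 := charP_of_injective_ringHom
    (((algebraMap (MvPolynomial (Fin 4) k) K).comp
      (MvPolynomial.C : k →+* MvPolynomial (Fin 4) k)).injective) 2
  have hθ0 : θ ≠ 0 := by
    rw [hθ]
    intro h
    exact MvPolynomial.X_ne_zero (2 : Fin 4)
      (IsFractionRing.injective (MvPolynomial (Fin 4) k) K (h.trans (map_zero _).symm))
  refine ⟨?_, dim8 K⟩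
  have h2K : (2 : K) = 0 := by
    have : ((2 : ℕ) : K) = 0 := CharP.cast_eq_zero K 2
    push_cast at this; exact this
  have h2 : (2 : MvPolynomial (Fin 3) K) = 0 := by
    rw [(map_ofNat (C : K →+* MvPolynomial (Fin 3) K) 2).symm, h2K, map_zero]
  have h3 : (3 : MvPolynomial (Fin 3) K) = 1 := by
    rw [show (3 : MvPolynomial (Fin 3) K) = 2 + 1 by ring, h2, zero_add]
  have hd0 : pderiv 0 F = C ξ * X 0 ^ 2 := by
    subst hF
    simp only [map_add, pderiv_mul, pderiv_pow, pderiv_X_self, pderiv_C,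
      pderiv_X_of_ne (show (2 : Fin 3) ≠ 0 by decide),
      pderiv_X_of_ne (show (1 : Fin 3) ≠ 0 by decide)]
    linear_combination (X 0 ^ 2 * C ξ + X 0 * X 1 * C η + X 0 * X 2 * C θ + X 0 * C ι) * h2
  have hd1 : pderiv 1 F = C η * X 0 ^ 2 + X 1 ^ 2 := by
    subst hF
    simp only [map_add, pderiv_mul, pderiv_pow, pderiv_X_self, pderiv_C,
      pderiv_X_of_ne (show (2 : Fin 3) ≠ 1 by decide),
      pderiv_X_of_ne (show (0 : Fin 3) ≠ 1 by decide)]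
    linear_combination (X 1 ^ 2) * h3
  have hd2 : pderiv 2 F = C θ * X 0 ^ 2 := by
    subst hF
    simp only [map_add, pderiv_mul, pderiv_pow, pderiv_X_self, pderiv_C,
      pderiv_X_of_ne (show (0 : Fin 3) ≠ 2 by decide),
      pderiv_X_of_ne (show (1 : Fin 3) ≠ 2 by decide)]
    linear_combination (X 2) * h2
  apply le_antisymm
  · rw [Ideal.span_le]
    have hx2 : (X 0 ^ 2 : MvPolynomial (Fin 3) K) ∈
        Ideal.span {(X 0 ^ 2 : MvPolynomial (Fin 3) K), X 1 ^ 2, X 2 ^ 2} :=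
      Ideal.subset_span (by simp)
    have hy2 : (X 1 ^ 2 : MvPolynomial (Fin 3) K) ∈
        Ideal.span {(X 0 ^ 2 : MvPolynomial (Fin 3) K), X 1 ^ 2, X 2 ^ 2} :=
      Ideal.subset_span (by simp)
    have hz2 : (X 2 ^ 2 : MvPolynomial (Fin 3) K) ∈
        Ideal.span {(X 0 ^ 2 : MvPolynomial (Fin 3) K), X 1 ^ 2, X 2 ^ 2} :=
      Ideal.subset_span (by simp)
    rintro p hp
    simp only [Set.mem_insert_iff, Set.mem_singleton_iff] at hp
    rcases hp with rfl | rfl | rfl | rfl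
    · rw [hd0]; exact Ideal.mul_mem_left _ _ hx2
    · rw [hd1]; exact add_mem (Ideal.mul_mem_left _ _ hx2) hy2
    · rw [hd2]; exact Ideal.mul_mem_left _ _ hx2
    · rw [hF]
      refine add_mem (add_mem hz2 (Ideal.mul_mem_left _ _ hx2)) ?_
      rw [show (X 1 ^ 3 : MvPolynomial (Fin 3) K) = X 1 * X 1 ^ 2 by ring]
      exact Ideal.mul_mem_left _ _ hy2
  · rw [Ideal.span_le]
    set J := Ideal.span {pderiv 0 F, pderiv 1 F, pderiv 2 F, F} with hJ
    have hm0 : pderiv 0 F ∈ J := Ideal.subset_span (by simp)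
    have hm1 : pderiv 1 F ∈ J := Ideal.subset_span (by simp)
    have hm2 : pderiv 2 F ∈ J := Ideal.subset_span (by simp)
    have hmF : F ∈ J := Ideal.subset_span (by simp)
    have hx2 : (X 0 ^ 2 : MvPolynomial (Fin 3) K) ∈ J := by
      have := Ideal.mul_mem_left J (C θ⁻¹) hm2
      rwa [hd2, ← mul_assoc, ← map_mul, inv_mul_cancel₀ hθ0, map_one, one_mul] at this
    have hy2 : (X 1 ^ 2 : MvPolynomial (Fin 3) K) ∈ J := by
      have := J.sub_mem hm1 (Ideal.mul_mem_left J (C η) hx2)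
      rwa [hd1, add_sub_cancel_left] at this
    have hz2 : (X 2 ^ 2 : MvPolynomial (Fin 3) K) ∈ J := by
      have heq : (X 2 ^ 2 : MvPolynomial (Fin 3) K)
          = F - (C ξ * X 0 + C η * X 1 + C θ * X 2 + C ι) * X 0 ^ 2 - X 1 * X 1 ^ 2 := by
        rw [hF]; ring
      rw [heq]
      exact J.sub_mem (J.sub_mem hmF (Ideal.mul_mem_left J _ hx2))
        (Ideal.mul_mem_left J _ hy2)
    rintro p hp
    simp only [Set.mem_insert_iff, Set.mem_singleton_iff] at hp
    rcases hp with rfl | rfl | rfl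
    · exact hx2
    · exact hy2
    · exact hz2
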